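/- Shift invariance of the Bures–Wasserstein barycenter functional on Laplacian pseudo-inverses: let L₁†, …, Lₙ† be Moore–Penrose pseudo-inverses of connected graph Laplacians on k vertices (all PSD with kernel spanned by 𝟙), let λᵢ ≥ 0 sum to 1, and let J = (1/k)𝟙𝟙ᵀ. Then for any PSD matrix S whose kernel contains 𝟙 (i.e., S𝟙 = 0), the weighted sum of Bures–Wasserstein squared distances satisfies ∑ᵢ λᵢ d_BW(S, Lᵢ†)² = ∑ᵢ λᵢ d_BW(S + J, Lᵢ† + J)² − c for a constant c independent of S; in particular minimizers over {S PSD : S𝟙 = 0} correspond under the shift S ↦ S + J. -/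

import Mathlib

open Matrix Finset

/-- The unique positive semidefinite square root of a positive semidefinite
matrix (junk value `0` off the PSD matrices). -/
noncomputable def msqrt {d : ℕ} (A : Matrix (Fin d) (Fin d) ℝ) :
    Matrix (Fin d) (Fin d) ℝ :=
  open scoped Classical MatrixOrder in if h : A.PosSemidef then CFC.sqrt A else 0

/-- The Bures–Wasserstein squared distance between PSD matrices. -/
noncomputable def dBWsq {d : ℕ} (A B : Matrix (Fin d) (Fin d) ℝ) : ℝ :=
  A.trace + B.trace - 2 * (msqrt (msqrt A * B * msqrt A)).trace

section aux

variable {k : ℕ}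

local notation "𝟙" => (fun _ => (1 : ℝ) : Fin k → ℝ)

open scoped MatrixOrder in
noncomputable def Matrix.PosSemidef.sqrt {A : Matrix (Fin k) (Fin k) ℝ} (_hA : A.PosSemidef) :
    Matrix (Fin k) (Fin k) ℝ := CFC.sqrt A

open scoped MatrixOrder in
lemma Matrix.PosSemidef.posSemidef_sqrt {A : Matrix (Fin k) (Fin k) ℝ} (hA : A.PosSemidef) :
    hA.sqrt.PosSemidef := Matrix.nonneg_iff_posSemidef.mp (CFC.sqrt_nonneg A)

open scoped MatrixOrder in
lemma Matrix.PosSemidef.sqrt_mul_self {A : Matrix (Fin k) (Fin k) ℝ} (hA : A.PosSemidef) :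
    hA.sqrt * hA.sqrt = A := CFC.sqrt_mul_sqrt_self A (Matrix.nonneg_iff_posSemidef.mpr hA)

open scoped MatrixOrder in
lemma Matrix.PosSemidef.eq_sqrt_of_sq_eq {A B : Matrix (Fin k) (Fin k) ℝ} (hB : B.PosSemidef)
    (hA : A.PosSemidef) (h : B ^ 2 = A) : B = hA.sqrt :=
  (CFC.sqrt_unique (by rw [← sq]; exact h) (Matrix.nonneg_iff_posSemidef.mpr hB)).symm

lemma msqrt_of_psd {A : Matrix (Fin k) (Fin k) ℝ} (hA : A.PosSemidef) :
    msqrt A = hA.sqrt := by simp [msqrt, hA, Matrix.PosSemidef.sqrt]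

lemma mulJ_eq_zero {M J : Matrix (Fin k) (Fin k) ℝ}
    (hJ : J = (k : ℝ)⁻¹ • vecMulVec 𝟙 𝟙) (hM : M *ᵥ 𝟙 = 0) : M * J = 0 := by
  ext i j
  have := congrFun hM i
  simp only [mulVec, dotProduct, mul_one, Pi.zero_apply] at this
  simp [hJ, Matrix.mul_apply, vecMulVec_apply, ← Finset.sum_mul, this]

lemma Jmul_eq_zero {M J : Matrix (Fin k) (Fin k) ℝ}
    (hJ : J = (k : ℝ)⁻¹ • vecMulVec 𝟙 𝟙) (hM : Mᵀ *ᵥ 𝟙 = 0) : J * M = 0 := by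
  ext i j
  have := congrFun hM j
  simp only [mulVec, dotProduct, transpose_apply, mul_one, Pi.zero_apply] at this
  simp [hJ, Matrix.mul_apply, vecMulVec_apply, ← Finset.mul_sum, this]

lemma JJ_eq_J {J : Matrix (Fin k) (Fin k) ℝ}
    (hJ : J = (k : ℝ)⁻¹ • vecMulVec 𝟙 𝟙) : J * J = J := by
  ext i j
  have hk : (k : ℝ) ≠ 0 := by
    have := i.pos
    positivity
  simp [hJ, Matrix.mul_apply, vecMulVec_apply]
  field_simp

lemma J_psd {J : Matrix (Fin k) (Fin k) ℝ}
    (hJ : J = (k : ℝ)⁻¹ • vecMulVec 𝟙 𝟙) : J.PosSemidef := by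
  rw [posSemidef_iff_dotProduct_mulVec]
  constructor
  · ext i j
    simp [hJ, vecMulVec_apply, conjTranspose_apply]
  · intro x
    have h : star x ⬝ᵥ J *ᵥ x = (k : ℝ)⁻¹ * (∑ i, x i) ^ 2 := by
      simp only [hJ, dotProduct, mulVec, vecMulVec_apply, Pi.star_apply,
        star_trivial, Matrix.smul_apply, smul_eq_mul, one_mul, mul_one]
      rw [← Finset.sum_mul, ← Finset.mul_sum]
      ring
    rw [h]
    positivity

lemma sqrt_mulVec_one {A : Matrix (Fin k) (Fin k) ℝ} (hA : A.PosSemidef)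
    (h1 : A *ᵥ 𝟙 = 0) : hA.sqrt *ᵥ 𝟙 = 0 := by
  set w := hA.sqrt *ᵥ 𝟙 with hw
  have hsym : hA.sqrtᵀ = hA.sqrt := by
    have := hA.posSemidef_sqrt.1
    simpa [Matrix.IsSymm] using this
  have hww : w ⬝ᵥ w = 0 := by
    calc w ⬝ᵥ w = (w ᵥ* hA.sqrt) ⬝ᵥ 𝟙 := by rw [hw, dotProduct_mulVec]
    _ = (hA.sqrtᵀ *ᵥ w) ⬝ᵥ 𝟙 := by rw [Matrix.mulVec_transpose]
    _ = (hA.sqrt *ᵥ w) ⬝ᵥ 𝟙 := by rw [hsym]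
    _ = (A *ᵥ 𝟙) ⬝ᵥ 𝟙 := by rw [hw, Matrix.mulVec_mulVec, hA.sqrt_mul_self]
    _ = 0 := by rw [h1, zero_dotProduct]
  exact dotProduct_self_eq_zero.mp hww

lemma msqrt_add_J {A J : Matrix (Fin k) (Fin k) ℝ}
    (hJ : J = (k : ℝ)⁻¹ • vecMulVec 𝟙 𝟙)
    (hA : A.PosSemidef) (h1 : A *ᵥ 𝟙 = 0) :
    msqrt (A + J) = msqrt A + J := by
  have hJpsd := J_psd hJ
  have hAJ : (A + J).PosSemidef := hA.add hJpsd
  have hS := sqrt_mulVec_one hA h1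
  have hsym : hA.sqrtᵀ = hA.sqrt := by simpa [Matrix.IsSymm] using hA.posSemidef_sqrt.1
  have hSJ : hA.sqrt * J = 0 := mulJ_eq_zero hJ hS
  have hJS : J * hA.sqrt = 0 := Jmul_eq_zero hJ (by rw [hsym]; exact hS)
  have hsq : (hA.sqrt + J) ^ 2 = A + J := by
    rw [sq, Matrix.add_mul, Matrix.mul_add, Matrix.mul_add, hSJ, hJS,
      hA.sqrt_mul_self, JJ_eq_J hJ]
    simp
  have hpsd : (hA.sqrt + J).PosSemidef := hA.posSemidef_sqrt.add hJpsd
  rw [msqrt_of_psd hAJ, msqrt_of_psd hA]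
  exact (hpsd.eq_sqrt_of_sq_eq hAJ hsq).symm

lemma dBWsq_shift {A B J : Matrix (Fin k) (Fin k) ℝ}
    (hJ : J = (k : ℝ)⁻¹ • vecMulVec 𝟙 𝟙)
    (hA : A.PosSemidef) (hA1 : A *ᵥ 𝟙 = 0)
    (hB : B.PosSemidef) (hB1 : B *ᵥ 𝟙 = 0) :
    dBWsq (A + J) (B + J) = dBWsq A B := by
  set S := hA.sqrt with hSdef
  have hsym : Sᵀ = S := by simpa [Matrix.IsSymm] using hA.posSemidef_sqrt.1
  have hS1 := sqrt_mulVec_one hA hA1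
  have hSJ : S * J = 0 := mulJ_eq_zero hJ hS1
  have hJS : J * S = 0 := Jmul_eq_zero hJ (by rw [hsym]; exact hS1)
  have hBJ : B * J = 0 := mulJ_eq_zero hJ hB1
  have hBT : Bᵀ = B := by simpa [Matrix.IsSymm] using hB.1
  have hJB : J * B = 0 := Jmul_eq_zero hJ (by rw [hBT]; exact hB1)
  have hmid : msqrt (A + J) * (B + J) * msqrt (A + J) = S * B * S + J := by
    rw [msqrt_add_J hJ hA hA1, msqrt_of_psd hA, ← hSdef]
    have h1 : (S + J) * (B + J) = S * B + J := by
      rw [Matrix.add_mul, Matrix.mul_add, Matrix.mul_add, hSJ, hJB, JJ_eq_J hJ]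
      simp
    rw [h1, Matrix.add_mul, Matrix.mul_add, Matrix.mul_add,
      Matrix.mul_assoc S B J, hBJ, hJS, JJ_eq_J hJ]
    simp
  have hSH : Sᴴ = S := hA.posSemidef_sqrt.1
  have hSBS : (S * B * S).PosSemidef := by
    have := hB.mul_mul_conjTranspose_same S
    rwa [hSH] at this
  have hSBS1 : (S * B * S) *ᵥ 𝟙 = 0 := by
    rw [Matrix.mul_assoc, ← Matrix.mulVec_mulVec, ← Matrix.mulVec_mulVec, hS1]
    simp
  have hrhs : msqrt A * B * msqrt A = S * B * S := by
    rw [msqrt_of_psd hA, ← hSdef]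
  simp only [dBWsq, hmid, hrhs, msqrt_add_J hJ hSBS hSBS1, trace_add]
  ring

end aux

/-- Shift invariance of the Bures–Wasserstein barycenter functional on
pseudo-inverses of connected graph Laplacians: the weighted objectives before
and after the shift `S ↦ S + J`, `Lᵢ† ↦ Lᵢ† + J` (with `J = (1/k)𝟙𝟙ᵀ`) differ
by a constant independent of `S`; in particular minimizers over
`{S PSD : S𝟙 = 0}` correspond under the shift. -/
theorem barycenter_shift_invariance {k n : ℕ}
    (Ldag : Fin n → Matrix (Fin k) (Fin k) ℝ)
    (hLdag : ∀ i, (Ldag i).PosSemidef)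
    (hLdag1 : ∀ i, Ldag i *ᵥ (fun _ => (1 : ℝ)) = 0)
    (lam : Fin n → ℝ) (hlam : ∀ i, 0 ≤ lam i) (hsum : ∑ i, lam i = 1)
    (J : Matrix (Fin k) (Fin k) ℝ)
    (hJ : J = (k : ℝ)⁻¹ • vecMulVec (fun _ => (1 : ℝ)) (fun _ => (1 : ℝ))) :
    (∃ c : ℝ, ∀ S : Matrix (Fin k) (Fin k) ℝ, S.PosSemidef →
        S *ᵥ (fun _ => (1 : ℝ)) = 0 →
        ∑ i, lam i * dBWsq S (Ldag i) =
          ∑ i, lam i * dBWsq (S + J) (Ldag i + J) - c) ∧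
      (∀ S₀ : Matrix (Fin k) (Fin k) ℝ, S₀.PosSemidef →
        S₀ *ᵥ (fun _ => (1 : ℝ)) = 0 →
        (∀ S : Matrix (Fin k) (Fin k) ℝ, S.PosSemidef →
          S *ᵥ (fun _ => (1 : ℝ)) = 0 →
          ∑ i, lam i * dBWsq S₀ (Ldag i) ≤ ∑ i, lam i * dBWsq S (Ldag i)) →
        (∀ S : Matrix (Fin k) (Fin k) ℝ, S.PosSemidef →
          S *ᵥ (fun _ => (1 : ℝ)) = 0 →
          ∑ i, lam i * dBWsq (S₀ + J) (Ldag i + J) ≤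
            ∑ i, lam i * dBWsq (S + J) (Ldag i + J))) := by
  have key : ∀ S : Matrix (Fin k) (Fin k) ℝ, S.PosSemidef →
      S *ᵥ (fun _ => (1 : ℝ)) = 0 →
      ∑ i, lam i * dBWsq (S + J) (Ldag i + J) = ∑ i, lam i * dBWsq S (Ldag i) := by
    intro S hS hS1
    exact Finset.sum_congr rfl fun i _ => by
      rw [dBWsq_shift hJ hS hS1 (hLdag i) (hLdag1 i)]
  refine ⟨⟨0, fun S hS hS1 => ?_⟩, fun S₀ h₀ h₀1 hmin S hS hS1 => ?_⟩
  · rw [sub_zero, key S hS hS1]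
  · rw [key S₀ h₀ h₀1, key S hS hS1]
    exact hmin S hS hS1
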